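/- For every integer q ≥ 3 and every integer r ≥ 1 there exists a perfect bitrade in the Hamming graph H(qr+1, q) of volume (q!)^r. -/

import Mathlib

open scoped BigOperators

/-- The ball of radius 1 centered at `x` in a graph `G`. -/
def ball1 {V : Type*} (G : SimpleGraph V) (x : V) : Set V := {y | y = x ∨ G.Adj x y}

/-- A perfect one-error-correcting code: the balls of radius 1 centered at the
vertices of `C` partition the vertex set. -/
def IsPerfectCode {V : Type*} (G : SimpleGraph V) (C : Set V) : Prop :=
  ∀ x : V, ∃! c, c ∈ C ∧ c ∈ ball1 G x

/-- A perfect bitrade: a pair of disjoint nonempty vertex sets such that every ball of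
radius 1 contains exactly one vertex of each, or none of either. -/
def IsPerfectBitrade {V : Type*} (G : SimpleGraph V) (T0 T1 : Set V) : Prop :=
  Disjoint T0 T1 ∧ T0.Nonempty ∧ T1.Nonempty ∧
    ∀ x : V,
      ((∃! y, y ∈ T0 ∧ y ∈ ball1 G x) ∧ (∃! y, y ∈ T1 ∧ y ∈ ball1 G x)) ∨
        (∀ y, y ∈ T0 ∪ T1 → y ∉ ball1 G x)

/-- A spherical bitrade: a pair of disjoint nonempty vertex sets such that every sphere of
radius 1 contains exactly one vertex of each, or none of either. -/
def IsSphericalBitrade {V : Type*} (G : SimpleGraph V) (S0 S1 : Set V) : Prop :=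
  Disjoint S0 S1 ∧ S0.Nonempty ∧ S1.Nonempty ∧
    ∀ x : V,
      ((∃! y, y ∈ S0 ∧ G.Adj x y) ∧ (∃! y, y ∈ S1 ∧ G.Adj x y)) ∨
        (∀ y, y ∈ S0 ∪ S1 → ¬ G.Adj x y)

/-- The Hamming graph `H(n,q)`: vertices are `n`-tuples over an alphabet of size `q`,
adjacent iff they differ in exactly one coordinate. -/
def hammingGraph (n q : ℕ) : SimpleGraph (Fin n → Fin q) where
  Adj x y := hammingDist x y = 1
  symm := ⟨fun x y h => by rwa [hammingDist_comm]⟩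
  loopless := ⟨fun x h => by simp [hammingDist_self] at h⟩

/-- `f` is a `μ`-eigenfunction of `G`: `f` is not identically zero and
`μ · f x = ∑_{y ∈ O(x)} f y` for every vertex `x`. -/
def IsEigenfun {V : Type*} (G : SimpleGraph V) (μ : ℝ) (f : V → ℝ) : Prop :=
  f ≠ 0 ∧ ∀ x : V, μ * f x = ∑ᶠ y ∈ G.neighborSet x, f y

/-- The characteristic function of a set of vertices. -/
noncomputable def chi {V : Type*} (C : Set V) : V → ℝ := Set.indicator C 1

/-- The code `C` has minimum (graph) distance exactly `d`. -/
def HasMinDist {V : Type*} (G : SimpleGraph V) (C : Set V) (d : ℕ) : Prop :=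
  (∀ x ∈ C, ∀ y ∈ C, x ≠ y → (d : ℕ∞) ≤ G.edist x y) ∧
    ∃ x ∈ C, ∃ y ∈ C, x ≠ y ∧ G.edist x y = d

/-- The code `C` of `n`-tuples has minimum Hamming distance exactly `d`. -/
def HasMinHDist {n q : ℕ} (C : Set (Fin n → Fin q)) (d : ℕ) : Prop :=
  (∀ x ∈ C, ∀ y ∈ C, x ≠ y → d ≤ hammingDist x y) ∧
    ∃ x ∈ C, ∃ y ∈ C, x ≠ y ∧ hammingDist x y = d

/-- `G` is distance-regular with intersection numbers `p i j k`. -/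
def IsDistRegular {V : Type*} (G : SimpleGraph V) (p : ℕ → ℕ → ℕ → ℕ) : Prop :=
  G.Connected ∧ ∀ (i j k : ℕ) (x y : V), G.edist x y = k →
    {z : V | G.edist x z = i ∧ G.edist z y = j}.ncard = p i j k

namespace S12
variable {q r : ℕ}
variable {q r : ℕ}

def idx (b : Fin r) (j : Fin q) : Fin (q * r + 1) :=
  ⟨b.val * q + j.val, by
    have h1 : b.val * q + j.val < (b.val + 1) * q := by rw [Nat.succ_mul]; omega
    have h2 : (b.val + 1) * q ≤ r * q := Nat.mul_le_mul_right q b.isLt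
    have h3 : r * q = q * r := Nat.mul_comm r q
    omega⟩

def lastIdx : Fin (q * r + 1) := ⟨q * r, Nat.lt_succ_self _⟩

lemma idx_lt (b : Fin r) (j : Fin q) : (idx b j).val < q * r := by
  have h1 : b.val * q + j.val < (b.val + 1) * q := by rw [Nat.succ_mul]; omega
  have h2 : (b.val + 1) * q ≤ r * q := Nat.mul_le_mul_right q b.isLt
  have h3 : r * q = q * r := Nat.mul_comm r q
  simpa [idx] using by omega

lemma idx_ne_last (b : Fin r) (j : Fin q) : idx b j ≠ lastIdx := by
  have := idx_lt b j
  intro h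
  rw [Fin.ext_iff] at h
  simp [lastIdx] at h
  omega

lemma idx_val_div (b : Fin r) (j : Fin q) : (b.val * q + j.val) / q = b.val := by
  have hq0 : 0 < q := j.pos
  rw [Nat.add_comm, Nat.add_mul_div_right _ _ hq0, Nat.div_eq_of_lt j.isLt, Nat.zero_add]

lemma idx_val_mod (b : Fin r) (j : Fin q) : (b.val * q + j.val) % q = j.val := by
  rw [Nat.add_comm, Nat.add_mul_mod_self_right, Nat.mod_eq_of_lt j.isLt]

lemma idx_inj {b b' : Fin r} {j j' : Fin q} (h : idx b j = idx b' j') : b = b' ∧ j = j' := by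
  rw [Fin.ext_iff] at h
  simp only [idx] at h
  constructor
  · apply Fin.ext
    rw [← idx_val_div b j, h, idx_val_div]
  · apply Fin.ext
    rw [← idx_val_mod b j, h, idx_val_mod]

lemma exists_idx (i : Fin (q * r + 1)) (h : i ≠ lastIdx) : ∃ b j, idx b j = i := by
  have hi : i.val < q * r := by
    have := i.isLt
    have : i.val ≠ q * r := fun hc => h (Fin.ext hc)
    omega
  have hq0 : 0 < q := by
    rcases Nat.eq_zero_or_pos q with h0 | h0
    · simp [h0] at hi
    · exact h0
  refine ⟨⟨i.val / q, ?_⟩, ⟨i.val % q, Nat.mod_lt _ hq0⟩, ?_⟩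
  · rw [Nat.div_lt_iff_lt_mul hq0]; exact lt_of_lt_of_eq hi (Nat.mul_comm q r)
  · apply Fin.ext
    simp only [idx]
    rw [Nat.mul_comm]
    exact Nat.div_add_mod _ _


lemma idx_val (b : Fin r) (j : Fin q) : (idx b j).val = b.val * q + j.val := rfl
variable {q r : ℕ}


def blk (x : Fin (q * r + 1) → Fin q) (b : Fin r) : Fin q → Fin q := fun j => x (idx b j)

noncomputable def sgn (f : Fin q → Fin q) : ℤˣ :=
  if h : Function.Bijective f then Equiv.Perm.sign (Equiv.ofBijective f h) else 1

lemma sgn_not_bij {f : Fin q → Fin q} (h : ¬ Function.Bijective f) : sgn f = 1 := dif_neg h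

lemma sgn_id : sgn (id : Fin q → Fin q) = 1 := by
  rw [sgn, dif_pos Function.bijective_id]
  have : Equiv.ofBijective (id : Fin q → Fin q) Function.bijective_id = Equiv.refl _ := by
    ext k; rfl
  rw [this, Equiv.Perm.sign_refl]

lemma sgn_comp_swap {g : Fin q → Fin q} (hg : Function.Bijective g) {j j2 : Fin q}
    (hjj : j ≠ j2) : sgn (g ∘ Equiv.swap j j2) = - sgn g := by
  have hb : Function.Bijective (g ∘ Equiv.swap j j2) := hg.comp (Equiv.swap j j2).bijective
  rw [sgn, sgn, dif_pos hb, dif_pos hg]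
  have he : Equiv.ofBijective (g ∘ Equiv.swap j j2) hb
      = (Equiv.ofBijective g hg) * (Equiv.swap j j2) := by
    ext k; rfl
  rw [he, map_mul, Equiv.Perm.sign_swap hjj, mul_neg_one]

noncomputable def prodSgn (x : Fin (q * r + 1) → Fin q) : ℤˣ := ∏ b : Fin r, sgn (blk x b)

noncomputable def par' [NeZero q] (u : ℤˣ) : Fin q := if u = 1 then 0 else 1

lemma zero_ne_one' [NeZero q] (hq : 3 ≤ q) : (0 : Fin q) ≠ 1 := by
  intro h
  have h1 : ((1 : Fin q) : ℕ) = 1 % q := rfl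
  have h0 : ((0 : Fin q) : ℕ) = 0 := rfl
  have h2 := congrArg Fin.val h
  rw [h0, h1, Nat.mod_eq_of_lt (by omega)] at h2
  omega

lemma par'_neg [NeZero q] (hq : 3 ≤ q) (u : ℤˣ) : par' (-u) ≠ (par' u : Fin q) := by
  have h01 := zero_ne_one' (q := q) hq
  rcases Int.units_eq_one_or u with h | h <;> subst h <;> simp only [par'] <;>
    norm_num <;> omega

lemma par'_mem [NeZero q] (u : ℤˣ) : (par' u : Fin q) = 0 ∨ (par' u : Fin q) = 1 := by
  unfold par'
  split
  · exact Or.inl rfl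
  · exact Or.inr rfl

def Full (x : Fin (q * r + 1) → Fin q) : Prop := ∀ b, Function.Bijective (blk x b)

/-- The set `T_s`. -/
noncomputable def Tset (q r : ℕ) [NeZero q] (s : ℤˣ) : Set (Fin (q * r + 1) → Fin q) :=
  {x | Full x ∧ x lastIdx = par' (s * prodSgn x)}

def build (G : Fin r → Fin q → Fin q) (c : Fin q) : Fin (q * r + 1) → Fin q :=
  fun i =>
    if h : i.val < q * r then
      have hq0 : 0 < q := by
        rcases Nat.eq_zero_or_pos q with h0 | h0
        · simp [h0] at h
        · exact h0
      G ⟨i.val / q, by rw [Nat.div_lt_iff_lt_mul hq0]; exact lt_of_lt_of_eq h (Nat.mul_comm q r)⟩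
        ⟨i.val % q, Nat.mod_lt _ hq0⟩
    else c

lemma build_last (G : Fin r → Fin q → Fin q) (c : Fin q) : build G c lastIdx = c := by
  simp [build, lastIdx]


lemma blk_build (G : Fin r → Fin q → Fin q) (c : Fin q) (b : Fin r) :
    blk (build G c) b = G b := by
  funext j
  have hlt : (idx b j).val < q * r := idx_lt b j
  simp only [blk, build, dif_pos hlt]
  congr 1
  · apply Fin.ext; simp only [idx_val, idx_val_div]
  · apply Fin.ext; simp only [idx_val, idx_val_mod]


-- chunk C: ball lemma, L1, candidates, shape
variable {q r : ℕ}

lemma mem_ball_iff {x y : Fin (q * r + 1) → Fin q} :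
    y ∈ ball1 (hammingGraph (q * r + 1) q) x ↔ ∃ i, ∀ k, k ≠ i → x k = y k := by
  have hmem : y ∈ ball1 (hammingGraph (q * r + 1) q) x ↔ (y = x ∨ hammingDist x y = 1) :=
    Iff.rfl
  have hd : (y = x ∨ hammingDist x y = 1) ↔ hammingDist x y ≤ 1 := by
    constructor
    · rintro (h | h)
      · subst h; simp [hammingDist_self]
      · omega
    · intro h
      rcases Nat.lt_or_ge (hammingDist x y) 1 with h1 | h1
      · left
        have : hammingDist x y = 0 := by omega
        exact (hammingDist_eq_zero.mp this).symm
      · right; omega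
  rw [hmem, hd]
  unfold hammingDist
  constructor
  · intro h
    obtain ⟨i, hi⟩ := Finset.card_le_one_iff_subset_singleton.mp h
    refine ⟨i, fun k hk => ?_⟩
    by_contra hne
    have : k ∈ Finset.univ.filter fun i => x i ≠ y i := by
      simp only [Finset.mem_filter, Finset.mem_univ, true_and]; exact hne
    have := hi this
    simp only [Finset.mem_singleton] at this
    exact hk this
  · rintro ⟨i, hi⟩
    calc (Finset.univ.filter fun i => x i ≠ y i).card ≤ ({i} : Finset _).card := by
          apply Finset.card_le_card
          intro k hk
          simp only [Finset.mem_filter, Finset.mem_univ, true_and] at hk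
          simp only [Finset.mem_singleton]
          by_contra hne
          exact hk (hi k hne)
      _ = 1 := Finset.card_singleton i

lemma bij_eq_of_agree_off {f g : Fin q → Fin q} (hf : Function.Bijective f)
    (hg : Function.Bijective g) (i : Fin q) (h : ∀ k, k ≠ i → f k = g k) : f = g := by
  funext k
  by_cases hk : k = i
  · subst hk
    obtain ⟨j, hj⟩ := hf.surjective (g k)
    by_cases hjk : j = k
    · subst hjk; exact hj
    · exfalso
      have h2 := h j hjk
      rw [hj] at h2
      exact hjk (hg.injective h2.symm)
  · exact h k hk

lemma exists_j2 {f g : Fin q → Fin q} (hf : ¬ Function.Bijective f)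
    (hg : Function.Bijective g) {j : Fin q} (hgf : ∀ k, k ≠ j → g k = f k) :
    ∃ j2, j ≠ j2 ∧ g j2 = f j := by
  obtain ⟨j2, hj2⟩ := hg.surjective (f j)
  refine ⟨j2, ?_, hj2⟩
  intro hc
  apply hf
  have : g = f := by
    funext k
    by_cases hk : k = j
    · subst hk; rw [← hc] at hj2; exact hj2
    · exact hgf k hk
  exact this ▸ hg

lemma g2_agree {f g : Fin q → Fin q} {j j2 : Fin q} (hjj : j ≠ j2) (hj2 : g j2 = f j)
    (hgf : ∀ k, k ≠ j → g k = f k) :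
    ∀ k, k ≠ j2 → (g ∘ Equiv.swap j j2) k = f k := by
  intro k hk
  by_cases hkj : k = j
  · subst hkj
    rw [Function.comp_apply, Equiv.swap_apply_left]
    exact hj2
  · rw [Function.comp_apply, Equiv.swap_apply_of_ne_of_ne hkj hk]
    exact hgf k hkj

lemma cand_unique {f g h : Fin q → Fin q} (hf : ¬ Function.Bijective f)
    (hg : Function.Bijective g) (hh : Function.Bijective h) {j j2 m : Fin q}
    (hgf : ∀ k, k ≠ j → g k = f k) (hjj : j ≠ j2) (hj2 : g j2 = f j)
    (hhf : ∀ k, k ≠ m → h k = f k) : h = g ∨ h = g ∘ Equiv.swap j j2 := by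
  by_cases hmj : m = j
  · left
    subst hmj
    exact bij_eq_of_agree_off hh hg m (fun k hk => (hhf k hk).trans (hgf k hk).symm)
  · right
    have hm2 : m = j2 := by
      by_contra hm2
      have e1 : h j2 = f j := by
        rw [hhf j2 (fun hc => hm2 hc.symm)]
        rw [← hgf j2 (Ne.symm hjj), hj2]
      have e2 : h j = f j := hhf j (fun hc => hmj hc.symm)
      exact hjj (hh.injective (e2.trans e1.symm))
    rw [hm2] at hhf
    exact bij_eq_of_agree_off hh (hg.comp (Equiv.swap j j2).bijective) j2
      (fun k hk => (hhf k hk).trans (g2_agree hjj hj2 hgf k hk).symm)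

lemma shape {x y : Fin (q * r + 1) → Fin q} {b0 : Fin r}
    (hbad : ¬ Function.Bijective (blk x b0)) (hy : Full y)
    {i : Fin (q * r + 1)} (hi : ∀ k, k ≠ i → x k = y k) :
    ∃ m : Fin q, (∀ k, k ≠ m → blk y b0 k = blk x b0 k) ∧
      (∀ b, b ≠ b0 → blk y b = blk x b) ∧ y lastIdx = x lastIdx := by
  have hm : ∃ m : Fin q, idx b0 m = i := by
    by_contra hns
    push_neg at hns
    apply hbad
    have : blk x b0 = blk y b0 := funext fun k => hi (idx b0 k) (hns k)
    exact this ▸ hy b0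
  obtain ⟨m, hmi⟩ := hm
  refine ⟨m, fun k hk => ?_, fun b hb => ?_, ?_⟩
  · refine (hi (idx b0 k) ?_).symm
    rw [← hmi]
    intro hc
    exact hk (idx_inj hc).2
  · funext k
    refine (hi (idx b k) ?_).symm
    rw [← hmi]
    intro hc
    exact hb (idx_inj hc).1
  · refine (hi lastIdx ?_).symm
    rw [← hmi]
    exact Ne.symm (idx_ne_last b0 m)

lemma prodSgn_congr {x y : Fin (q * r + 1) → Fin q} (h : ∀ b, blk x b = blk y b) :
    prodSgn x = prodSgn y :=
  Finset.prod_congr rfl fun b _ => by rw [h b]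

lemma ext_blocks {x y : Fin (q * r + 1) → Fin q} (h : ∀ b, blk x b = blk y b)
    (hl : x lastIdx = y lastIdx) : x = y := by
  funext i
  by_cases hi : i = lastIdx
  · subst hi; exact hl
  · obtain ⟨b, j, hbj⟩ := exists_idx i hi
    rw [← hbj]
    exact congrFun (h b) j

lemma prodSgn_eq (x : Fin (q * r + 1) → Fin q) (b0 : Fin r) :
    prodSgn x = sgn (blk x b0) * ∏ b ∈ Finset.univ.erase b0, sgn (blk x b) :=
  (Finset.mul_prod_erase _ _ (Finset.mem_univ b0)).symm

/-! Witness machinery. -/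

/-- Modify `x` by replacing block `b0` with `h` (keeping the last coordinate). -/
noncomputable def Yb (x : Fin (q * r + 1) → Fin q) (b0 : Fin r) (h : Fin q → Fin q) :
    Fin (q * r + 1) → Fin q :=
  build (Function.update (fun b => blk x b) b0 h) (x lastIdx)

lemma blk_Yb_same (x : Fin (q * r + 1) → Fin q) (b0 : Fin r) (h : Fin q → Fin q) :
    blk (Yb x b0 h) b0 = h := by
  rw [Yb, blk_build, Function.update_self]

lemma blk_Yb_other (x : Fin (q * r + 1) → Fin q) {b0 b : Fin r} (h : Fin q → Fin q)
    (hb : b ≠ b0) : blk (Yb x b0 h) b = blk x b := by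
  rw [Yb, blk_build, Function.update_of_ne hb]

lemma Yb_last (x : Fin (q * r + 1) → Fin q) (b0 : Fin r) (h : Fin q → Fin q) :
    Yb x b0 h lastIdx = x lastIdx := build_last _ _

lemma prodSgn_Yb (x : Fin (q * r + 1) → Fin q) (b0 : Fin r) (h : Fin q → Fin q) :
    prodSgn (Yb x b0 h) = sgn h * ∏ b ∈ Finset.univ.erase b0, sgn (blk x b) := by
  rw [prodSgn_eq _ b0, blk_Yb_same]
  congr 1
  refine Finset.prod_congr rfl fun b hb => ?_
  rw [blk_Yb_other x h (Finset.ne_of_mem_erase hb)]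

lemma Full_Yb {x : Fin (q * r + 1) → Fin q} {b0 : Fin r} {h : Fin q → Fin q}
    (hh : Function.Bijective h) (hgood : ∀ b, b ≠ b0 → Function.Bijective (blk x b)) :
    Full (Yb x b0 h) := by
  intro b
  by_cases hb : b = b0
  · subst hb; rw [blk_Yb_same]; exact hh
  · rw [blk_Yb_other x h hb]; exact hgood b hb

lemma Yb_ball {x : Fin (q * r + 1) → Fin q} {b0 : Fin r} {h : Fin q → Fin q} {m : Fin q}
    (hhf : ∀ k, k ≠ m → h k = blk x b0 k) :
    Yb x b0 h ∈ ball1 (hammingGraph (q * r + 1) q) x := by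
  rw [mem_ball_iff]
  refine ⟨idx b0 m, fun k hk => ?_⟩
  by_cases hkl : k = lastIdx
  · subst hkl; exact (Yb_last x b0 h).symm
  · obtain ⟨b, j, hbj⟩ := exists_idx k hkl
    subst hbj
    by_cases hb : b = b0
    · have hj : j ≠ m := fun hc => hk (by rw [hb, hc])
      have hkey : blk (Yb x b0 h) b0 j = blk x b0 j := by
        rw [blk_Yb_same]; exact hhf j hj
      rw [hb]
      exact hkey.symm
    · exact (congrFun (blk_Yb_other x h hb) j).symm

/-- Case: all blocks of `x` are bijective. -/
lemma full_case [NeZero q] {x : Fin (q * r + 1) → Fin q} (hx : Full x) (s : ℤˣ) :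
    ∃! y, y ∈ Tset q r s ∧ y ∈ ball1 (hammingGraph (q * r + 1) q) x := by
  set c := (par' (s * prodSgn x) : Fin q) with hc
  set y0 := build (fun b => blk x b) c with hy0
  have hblk : ∀ b, blk y0 b = blk x b := fun b => blk_build _ _ b
  have hps : prodSgn y0 = prodSgn x := prodSgn_congr hblk
  refine ⟨y0, ⟨⟨fun b => (hblk b).symm ▸ hx b, by rw [hy0, build_last, hps]⟩, ?_⟩, ?_⟩
  · rw [mem_ball_iff]
    refine ⟨lastIdx, fun k hk => ?_⟩
    obtain ⟨b, j, hbj⟩ := exists_idx k hk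
    rw [← hbj]
    exact (congrFun (hblk b) j).symm
  · rintro y ⟨⟨hyF, hyL⟩, hyB⟩
    rw [mem_ball_iff] at hyB
    obtain ⟨i, hi⟩ := hyB
    have hady : ∀ b, blk y b = blk x b := by
      intro b
      by_cases hbi : ∃ j, idx b j = i
      · obtain ⟨j, hj⟩ := hbi
        refine bij_eq_of_agree_off (hyF b) (hx b) j fun k hk => ?_
        refine (hi (idx b k) ?_).symm
        rw [← hj]
        intro hc'
        exact hk (idx_inj hc').2
      · push_neg at hbi
        funext k
        exact (hi (idx b k) (hbi k)).symm
    refine ext_blocks (fun b => (hady b).trans (hblk b).symm) ?_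
    rw [hyL, prodSgn_congr hady, hy0, build_last]

/-- Case: block `b0` is not bijective, all others are, a "near-bijection" exists,
and the last coordinate of `x` is `0` or `1`. -/
lemma onebad_exu [NeZero q] (hq : 3 ≤ q) {x : Fin (q * r + 1) → Fin q} {b0 : Fin r}
    (hbad : ¬ Function.Bijective (blk x b0))
    (hgood : ∀ b, b ≠ b0 → Function.Bijective (blk x b))
    {g : Fin q → Fin q} {j : Fin q} (hg : Function.Bijective g)
    (hgf : ∀ k, k ≠ j → g k = blk x b0 k)
    (hc01 : x lastIdx = 0 ∨ x lastIdx = 1) (s : ℤˣ) :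
    ∃! y, y ∈ Tset q r s ∧ y ∈ ball1 (hammingGraph (q * r + 1) q) x := by
  classical
  obtain ⟨j2, hjj, hj2⟩ := exists_j2 hbad hg hgf
  set g2 := g ∘ Equiv.swap j j2 with hg2def
  have hg2 : Function.Bijective g2 := hg.comp (Equiv.swap j j2).bijective
  have hg2f : ∀ k, k ≠ j2 → g2 k = blk x b0 k := g2_agree hjj hj2 hgf
  set P := ∏ b ∈ Finset.univ.erase b0, sgn (blk x b) with hP
  have hsg2 : sgn g2 = - sgn g := sgn_comp_swap hg hjj
  have hneg : s * (sgn g2 * P) = -(s * (sgn g * P)) := by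
    rw [hsg2, neg_mul, mul_neg]
  have hpar_ne : (par' (s * (sgn g2 * P)) : Fin q) ≠ par' (s * (sgn g * P)) := by
    rw [hneg]; exact par'_neg hq _
  -- membership characterization for Yb-witnesses
  have hmemY : ∀ (h : Fin q → Fin q), Function.Bijective h →
      (Yb x b0 h ∈ Tset q r s ↔ x lastIdx = par' (s * (sgn h * P))) := by
    intro h hh
    constructor
    · rintro ⟨-, hl⟩
      rw [Yb_last, prodSgn_Yb] at hl
      exact hl
    · intro hl
      exact ⟨Full_Yb hh hgood, by rw [Yb_last, prodSgn_Yb]; exact hl⟩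
  -- the selection
  have hsel : x lastIdx = par' (s * (sgn g * P)) ∨ x lastIdx = par' (s * (sgn g2 * P)) := by
    rcases par'_mem (q := q) (s * (sgn g * P)) with h1 | h1 <;>
      rcases par'_mem (q := q) (s * (sgn g2 * P)) with h2 | h2 <;>
        rcases hc01 with hc | hc <;>
          first
            | (exact absurd (h2.trans h1.symm) hpar_ne)
            | (left; exact hc.trans h1.symm)
            | (right; exact hc.trans h2.symm)
  -- uniqueness helper: structure of any solution
  have huniq : ∀ y, (y ∈ Tset q r s ∧ y ∈ ball1 (hammingGraph (q * r + 1) q) x) →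
      (y = Yb x b0 g ∧ x lastIdx = par' (s * (sgn g * P))) ∨
      (y = Yb x b0 g2 ∧ x lastIdx = par' (s * (sgn g2 * P))) := by
    rintro y ⟨⟨hyF, hyL⟩, hyB⟩
    rw [mem_ball_iff] at hyB
    obtain ⟨i, hi⟩ := hyB
    obtain ⟨m, hm0, hmo, hml⟩ := shape hbad hyF hi
    have hcases := cand_unique hbad hg (hyF b0) hgf hjj hj2 hm0
    have hyP : prodSgn y = sgn (blk y b0) * P := by
      rw [prodSgn_eq y b0]
      congr 1
      exact Finset.prod_congr rfl fun b hb => by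
        rw [hmo b (Finset.ne_of_mem_erase hb)]
    have hxl : x lastIdx = par' (s * (sgn (blk y b0) * P)) := by
      rw [← hml, hyL, hyP]
    have hyeq : ∀ h : Fin q → Fin q, blk y b0 = h → y = Yb x b0 h := by
      intro h hbh
      refine ext_blocks (fun b => ?_) (by rw [hml, Yb_last])
      by_cases hb : b = b0
      · subst hb; rw [hbh, blk_Yb_same]
      · rw [hmo b hb, blk_Yb_other x h hb]
    rcases hcases with hcg | hcg2
    · exact Or.inl ⟨hyeq g hcg, by rw [← hcg]; exact hxl⟩
    · exact Or.inr ⟨hyeq g2 hcg2, by rw [hg2def, ← hcg2]; exact hxl⟩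
  by_cases hwc : x lastIdx = par' (s * (sgn g * P))
  · refine ⟨Yb x b0 g, ⟨(hmemY g hg).mpr hwc, Yb_ball hgf⟩, ?_⟩
    intro y hy
    rcases huniq y hy with ⟨h1, -⟩ | ⟨-, h2⟩
    · exact h1
    · exact absurd (h2.symm.trans hwc) hpar_ne
  · have hwc2 : x lastIdx = par' (s * (sgn g2 * P)) := hsel.resolve_left hwc
    refine ⟨Yb x b0 g2, ⟨(hmemY g2 hg2).mpr hwc2, Yb_ball hg2f⟩, ?_⟩
    intro y hy
    rcases huniq y hy with ⟨-, h1⟩ | ⟨h2, -⟩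
    · exact absurd h1 hwc
    · exact h2

/-! Nonemptiness and cardinality. -/

lemma prodSgn_build_id (c : Fin q) :
    prodSgn (build (fun _ : Fin r => (id : Fin q → Fin q)) c) = 1 := by
  have h : ∀ b ∈ Finset.univ, sgn (blk (build (fun _ : Fin r => (id : Fin q → Fin q)) c) b)
      = (1 : ℤˣ) := fun b _ => by rw [blk_build]; exact sgn_id
  rw [prodSgn, Finset.prod_congr rfl h, Finset.prod_const_one]

lemma mem0 [NeZero q] : build (fun _ : Fin r => (id : Fin q → Fin q)) 0 ∈ Tset q r 1 := by
  refine ⟨fun b => ?_, ?_⟩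
  · rw [blk_build]; exact Function.bijective_id
  · rw [build_last, prodSgn_build_id, mul_one]
    simp [par']

lemma mem1 [NeZero q] : build (fun _ : Fin r => (id : Fin q → Fin q)) 1 ∈ Tset q r (-1) := by
  refine ⟨fun b => ?_, ?_⟩
  · rw [blk_build]; exact Function.bijective_id
  · rw [build_last, prodSgn_build_id, mul_one]
    have : (-1 : ℤˣ) ≠ 1 := by decide
    simp [par', this]

noncomputable def Fmap (q r : ℕ) [NeZero q]
    (p : Fin r → {f : Fin q → Fin q // Function.Bijective f}) : Fin (q * r + 1) → Fin q :=
  build (fun b => (p b).1) (par' (∏ b : Fin r, sgn ((p b).1)))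

lemma prodSgn_Fmap [NeZero q] (p : Fin r → {f : Fin q → Fin q // Function.Bijective f}) :
    prodSgn (Fmap q r p) = ∏ b : Fin r, sgn ((p b).1) :=
  Finset.prod_congr rfl fun b _ => by rw [Fmap, blk_build]

lemma Fmap_mem [NeZero q] (p : Fin r → {f : Fin q → Fin q // Function.Bijective f}) :
    Fmap q r p ∈ Tset q r 1 := by
  refine ⟨fun b => ?_, ?_⟩
  · have h : blk (Fmap q r p) b = (p b).1 := by rw [Fmap, blk_build]
    exact h ▸ (p b).2
  · rw [one_mul, prodSgn_Fmap, Fmap, build_last]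

lemma Tset_eq_range [NeZero q] : Tset q r 1 = Set.range (Fmap q r) := by
  ext y
  constructor
  · rintro ⟨hyF, hyL⟩
    refine ⟨fun b => ⟨blk y b, hyF b⟩, ?_⟩
    refine ext_blocks (fun b => ?_) ?_
    · rw [Fmap, blk_build]
    · rw [Fmap, build_last, hyL, one_mul]
      rfl
  · rintro ⟨p, rfl⟩
    exact Fmap_mem p

lemma Fmap_inj [NeZero q] : Function.Injective (Fmap q r) := by
  intro p p' h
  funext b
  apply Subtype.ext
  have hb : blk (Fmap q r p) b = blk (Fmap q r p') b := by rw [h]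
  rwa [Fmap, Fmap, blk_build, blk_build] at hb

noncomputable def permEquiv (q : ℕ) : Equiv.Perm (Fin q) ≃ {f : Fin q → Fin q // Function.Bijective f} where
  toFun e := ⟨e, e.bijective⟩
  invFun s := Equiv.ofBijective s.1 s.2
  left_inv e := Equiv.ext fun _ => rfl
  right_inv s := Subtype.ext rfl

lemma card_T0 [NeZero q] : (Tset q r 1).ncard = (Nat.factorial q) ^ r := by
  rw [Tset_eq_range, ← Nat.card_coe_set_eq]
  rw [Nat.card_congr (Equiv.ofInjective _ (Fmap_inj (q := q) (r := r))).symm]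
  rw [Nat.card_fun]
  have h1 : Nat.card {f : Fin q → Fin q // Function.Bijective f} = Nat.factorial q := by
    rw [Nat.card_congr (permEquiv q).symm, Nat.card_eq_fintype_card, Fintype.card_perm,
      Fintype.card_fin]
  rw [h1, Nat.card_eq_fintype_card, Fintype.card_fin]

end S12

/-- For every `q ≥ 3` and `r ≥ 1` there is a perfect bitrade in `H(qr+1,q)`
of volume `(q!)^r`. -/
theorem statement12 (q r : ℕ) (hq : 3 ≤ q) (hr : 1 ≤ r) :
    ∃ T0 T1 : Set (Fin (q * r + 1) → Fin q),
      IsPerfectBitrade (hammingGraph (q * r + 1) q) T0 T1 ∧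
        T0.ncard = (Nat.factorial q) ^ r := by
  haveI : NeZero q := ⟨by omega⟩
  classical
  refine ⟨S12.Tset q r 1, S12.Tset q r (-1), ⟨?_, ?_, ?_, ?_⟩, S12.card_T0⟩
  · -- disjointness
    rw [Set.disjoint_left]
    rintro x ⟨hxF, hx0⟩ ⟨-, hx1⟩
    have h := hx0.symm.trans hx1
    rw [one_mul, neg_one_mul] at h
    exact S12.par'_neg hq (S12.prodSgn x) h.symm
  · exact ⟨_, S12.mem0⟩
  · exact ⟨_, S12.mem1⟩
  · intro x
    by_cases hFull : S12.Full x
    · exact Or.inl ⟨S12.full_case hFull 1, S12.full_case hFull (-1)⟩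
    · simp only [S12.Full, not_forall] at hFull
      obtain ⟨b0, hbad⟩ := hFull
      have hFully : ∀ y, y ∈ S12.Tset q r 1 ∪ S12.Tset q r (-1) → S12.Full y := by
        rintro y (⟨h, -⟩ | ⟨h, -⟩) <;> exact h
      by_cases htwo : ∀ b, b ≠ b0 → Function.Bijective (S12.blk x b)
      · by_cases hcand : ∃ g j, Function.Bijective g ∧
            ∀ k, k ≠ j → g k = S12.blk x b0 k
        · obtain ⟨g, j, hg, hgf⟩ := hcand
          by_cases hc01 : x S12.lastIdx = 0 ∨ x S12.lastIdx = 1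
          · exact Or.inl ⟨S12.onebad_exu hq hbad htwo hg hgf hc01 1,
              S12.onebad_exu hq hbad htwo hg hgf hc01 (-1)⟩
          · refine Or.inr fun y hy hyb => ?_
            rw [S12.mem_ball_iff] at hyb
            obtain ⟨i, hi⟩ := hyb
            obtain ⟨m, hm0, hmo, hml⟩ := S12.shape hbad (hFully y hy) hi
            have hyl : y S12.lastIdx = 0 ∨ y S12.lastIdx = 1 := by
              rcases hy with ⟨-, h⟩ | ⟨-, h⟩ <;> rw [h] <;> exact S12.par'_mem _
            rw [hml] at hyl
            exact hc01 hyl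
        · refine Or.inr fun y hy hyb => ?_
          rw [S12.mem_ball_iff] at hyb
          obtain ⟨i, hi⟩ := hyb
          obtain ⟨m, hm0, -, -⟩ := S12.shape hbad (hFully y hy) hi
          exact hcand ⟨S12.blk y b0, m, hFully y hy b0, hm0⟩
      · push_neg at htwo
        obtain ⟨b1, hb1, hbad1⟩ := htwo
        refine Or.inr fun y hy hyb => ?_
        rw [S12.mem_ball_iff] at hyb
        obtain ⟨i, hi⟩ := hyb
        obtain ⟨m, -, hmo, -⟩ := S12.shape hbad (hFully y hy) hi
        exact hbad1 ((hmo b1 hb1) ▸ hFully y hy b1)
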